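/- Let n ≥ 1 and x be natural numbers with x ≤ n, let a, b, α, β₀ be real numbers with 0 ≤ a ≤ b ≤ β₀, β₀ > 0, α ≥ 0, and assume it is not the case that both a = b and x = n. Define a sequence (α_m) by α₀ = α and α_m = (a(α_{m−1} + β₀ + n) + (β₀ − b)(α_{m−1} + x)) / (β₀ + n − x) for m ≥ 1 (this is the solution of (α_m − a)/(α_m + β₀ − b) = (α_{m−1} + x)/(α_{m−1} + β₀ + n)). Then the sequence of Bayes estimates (α_m + x)/(α_m + β₀ + n) converges, as m → ∞, to (x + a)/(n + b). -/

import Mathlib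

/-- Theorem 1 of the paper: iterative Bayes estimation in the binomial model.
Replacing the characteristic `(α − a)/(α + β − b)` of the `Beta(α, β₀)` prior by the
posterior expectation on every iteration, the Bayes estimates converge to `(x + a)/(n + b)`. -/
theorem iterative_bayes_binomial (n x : ℕ) (hn : 1 ≤ n) (hx : x ≤ n)
    (a b α β₀ : ℝ) (ha : 0 ≤ a) (hab : a ≤ b) (hbβ : b ≤ β₀) (hβ : 0 < β₀) (hα : 0 ≤ α)
    (hne : ¬(a = b ∧ x = n))
    (α_seq : ℕ → ℝ) (h0 : α_seq 0 = α)
    (hrec : ∀ m : ℕ, α_seq (m + 1) =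
      (a * (α_seq m + β₀ + n) + (β₀ - b) * (α_seq m + x)) / (β₀ + n - x)) :
    Filter.Tendsto (fun m => (α_seq m + x) / (α_seq m + β₀ + n))
      Filter.atTop (nhds (((x : ℝ) + a) / ((n : ℝ) + b))) := by
  have hxn : (x : ℝ) ≤ (n : ℝ) := by exact_mod_cast hx
  have hD : (0:ℝ) < β₀ + n - x := by linarith
  have hE : (0:ℝ) < (n:ℝ) - x + b - a := by
    rcases lt_or_eq_of_le hab with h | h
    · linarith
    · have hxn' : x < n := by
        rcases lt_or_eq_of_le hx with h2 | h2
        · exact h2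
        · exact absurd ⟨h, h2⟩ hne
      have : (x:ℝ) < n := by exact_mod_cast hxn'
      linarith
  set c : ℝ := (a + β₀ - b) / (β₀ + n - x) with hc
  set L : ℝ := (a*β₀ + a*n + β₀*x - b*x) / ((n:ℝ) - x + b - a) with hL
  have hc0 : 0 ≤ c := div_nonneg (by linarith) hD.le
  have hc1 : c < 1 := by
    rw [hc, div_lt_one hD]
    linarith
  -- closed form
  have hform : ∀ m, α_seq m = L + c ^ m * (α - L) := by
    intro m
    induction m with
    | zero => simp [h0]
    | succ m ih =>
      rw [hrec m, ih]
      have hDne : (β₀ + (n:ℝ) - x) ≠ 0 := hD.ne'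
      have hEne : ((n:ℝ) - x + b - a) ≠ 0 := hE.ne'
      rw [pow_succ]
      generalize c ^ m = t
      rw [hc, hL]
      field_simp
      ring
  have htL : Filter.Tendsto α_seq Filter.atTop (nhds L) := by
    have : Filter.Tendsto (fun m => L + c ^ m * (α - L)) Filter.atTop (nhds (L + 0 * (α - L))) := by
      apply Filter.Tendsto.add tendsto_const_nhds
      exact (tendsto_pow_atTop_nhds_zero_of_lt_one hc0 hc1).mul_const _
    simp only [zero_mul, add_zero] at this
    exact this.congr (fun m => (hform m).symm)
  have hnb : (0:ℝ) < (n:ℝ) + b := by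
    have : (1:ℝ) ≤ n := by exact_mod_cast hn
    linarith
  have hLden : L + β₀ + n ≠ 0 := by
    have : L + β₀ + (n:ℝ) = ((n:ℝ) + b) * (β₀ + n - x) / ((n:ℝ) - x + b - a) := by
      rw [hL]; field_simp; ring
    rw [this]
    exact ne_of_gt (div_pos (mul_pos hnb hD) hE)
  have hval : (L + x) / (L + β₀ + n) = ((x:ℝ) + a) / ((n:ℝ) + b) := by
    rw [hL]
    rw [div_eq_div_iff]
    · field_simp
      ring
    · have : (a*β₀ + a*n + β₀*x - b*x) / ((n:ℝ) - x + b - a) + β₀ + (n:ℝ)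
          = ((n:ℝ) + b) * (β₀ + n - x) / ((n:ℝ) - x + b - a) := by
        field_simp; ring
      rw [this]; exact (div_pos (mul_pos hnb hD) hE).ne'
    · exact hnb.ne'
  rw [← hval]
  have h2 : Filter.Tendsto (fun m => α_seq m + β₀ + (n:ℝ)) Filter.atTop (nhds (L + β₀ + n)) := by
    have := htL.add_const (β₀ + (n:ℝ))
    simpa [add_assoc] using this
  exact ((htL.add_const _).div h2 hLden)
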